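/- Let (Γ, T, n⊥, n, κ_g, τ_g) be a closed asymptotic curve in ℝ³. Then the function h(t) := ⟨Γ(t), n(t)⟩ satisfies h′(t) = −τ_g(t)·⟨Γ(t), n⊥(t)⟩ for all t; consequently, since h is 2π-periodic and τ_g is nowhere zero, for every point p ∈ ℝ³ there exists t ∈ [0, 2π] with ⟨Γ(t) − p, n⊥(t)⟩ = 0. -/

import Mathlib

open Real intervalIntegral

noncomputable section

/-- The cross product on `EuclideanSpace ℝ (Fin 3)`. -/
def cross3 (a b : EuclideanSpace ℝ (Fin 3)) : EuclideanSpace ℝ (Fin 3) :=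
  (EuclideanSpace.equiv (Fin 3) ℝ).symm
    (crossProduct ((EuclideanSpace.equiv (Fin 3) ℝ) a) ((EuclideanSpace.equiv (Fin 3) ℝ) b))

/-- The function `h = ⟨Γ, n⟩` satisfies `h′ = −τ_g·⟨Γ, n⊥⟩`; since `h` is periodic and
`τ_g` never vanishes, for every point `p` some tangent plane line meets it:
`⟨Γ(t) − p, n⊥(t)⟩ = 0` for some `t ∈ [0, 2π]`. -/
theorem stmt4
    (Γ n : ℝ → EuclideanSpace ℝ (Fin 3)) (κg τg : ℝ → ℝ)
    (hΓ : ContDiff ℝ 2 Γ) (hΓper : Function.Periodic Γ (2 * π))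
    (hT1 : ∀ t, ‖deriv Γ t‖ = 1)
    (hn : ContDiff ℝ 1 n) (hnper : Function.Periodic n (2 * π))
    (hn1 : ∀ t, ‖n t‖ = 1)
    (hnT : ∀ t, (inner ℝ (n t) (deriv Γ t) : ℝ) = 0)
    (hκcont : Continuous κg) (hκper : Function.Periodic κg (2 * π))
    (hτcont : Continuous τg) (hτper : Function.Periodic τg (2 * π))
    (hτ : ∀ t, τg t ≠ 0)
    (hDarboux1 : ∀ t, deriv (deriv Γ) t = κg t • cross3 (n t) (deriv Γ t))
    (hDarboux2 : ∀ t, deriv (fun s => cross3 (n s) (deriv Γ s)) t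
      = -κg t • deriv Γ t + τg t • n t)
    (hDarboux3 : ∀ t, deriv n t = -τg t • cross3 (n t) (deriv Γ t))
    :
    (∀ t, deriv (fun s => (inner ℝ (Γ s) (n s) : ℝ)) t
        = -τg t * (inner ℝ (Γ t) (cross3 (n t) (deriv Γ t)) : ℝ)) ∧
    ∀ p : EuclideanSpace ℝ (Fin 3), ∃ t ∈ Set.Icc (0 : ℝ) (2 * π),
      (inner ℝ (Γ t - p) (cross3 (n t) (deriv Γ t)) : ℝ) = 0 := by
  have hΓd : ∀ t, HasDerivAt Γ (deriv Γ t) t := fun t =>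
    ((hΓ.differentiable (by norm_num)) t).hasDerivAt
  have hnd : ∀ t, HasDerivAt n (deriv n t) t := fun t =>
    ((hn.differentiable (by norm_num)) t).hasDerivAt
  have key : ∀ (p : EuclideanSpace ℝ (Fin 3)) t,
      HasDerivAt (fun s => (inner ℝ (Γ s - p) (n s) : ℝ))
        (-τg t * (inner ℝ (Γ t - p) (cross3 (n t) (deriv Γ t)) : ℝ)) t := by
    intro p t
    have h1 : HasDerivAt (fun s => Γ s - p) (deriv Γ t) t := (hΓd t).sub_const p
    have h2 := (h1.inner ℝ (hnd t))
    have e1 : (inner ℝ (deriv Γ t) (n t) : ℝ) = 0 := by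
      rw [real_inner_comm]; exact hnT t
    have e2 : (inner ℝ (Γ t - p) (deriv n t) : ℝ)
        = -τg t * (inner ℝ (Γ t - p) (cross3 (n t) (deriv Γ t)) : ℝ) := by
      rw [hDarboux3 t, real_inner_smul_right]
    rw [e1, e2] at h2
    simpa using h2
  constructor
  · intro t
    have := key 0 t
    simp only [sub_zero] at this
    exact this.deriv
  · intro p
    have hcont : ContinuousOn (fun s => (inner ℝ (Γ s - p) (n s) : ℝ))
        (Set.Icc 0 (2 * π)) := fun x _ => ((key p x).differentiableAt.continuousAt).continuousWithinAt
    have hper : (fun s => (inner ℝ (Γ s - p) (n s) : ℝ)) 0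
        = (fun s => (inner ℝ (Γ s - p) (n s) : ℝ)) (2 * π) := by
      simp only
      have h1 : Γ (2 * π) = Γ 0 := by simpa using hΓper 0
      have h2 : n (2 * π) = n 0 := by simpa using hnper 0
      rw [h1, h2]
    obtain ⟨c, hc, hc0⟩ := exists_deriv_eq_zero (f := fun s => (inner ℝ (Γ s - p) (n s) : ℝ))
      (by positivity : (0:ℝ) < 2 * π) hcont hper
    refine ⟨c, Set.Ioo_subset_Icc_self hc, ?_⟩
    have := (key p c).deriv
    rw [hc0] at this
    rcases mul_eq_zero.mp this.symm with h | h
    · exact absurd (neg_eq_zero.mp h) (hτ c)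
    · exact h
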